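/- The functor D preserves the deformation structure: Let A_ħ be a formal bigraded deformation of an A∞-algebra A with compatible bigrading of s-th type, and set D(A_ħ) = {a ∈ A_ħ : m̃₁(a) ∈ ħ·A_ħ} with structure maps m̃_i^D = ħ^{i−2} m̃_i restricted to D(A_ħ). Then: (1) the m̃_i^D map D(A_ħ)-tuples into D(A_ħ); (2) D(A_ħ) is an A∞-algebra over k[ħ]; (3) D(A_ħ) is ħ-torsion-free and bigraded complete, hence ħ-topologically free; and (4) D(A_ħ) is a formal bigraded deformation of an A∞-algebra with compatible bigrading of (s+1)-th type. If moreover m₁ = 0 on A, then D(A_ħ) = T(A_ħ). -/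

import Mathlib

open scoped BigOperators

namespace Paper

/-- The family of `n`-ary multilinear structure maps of an (`A_N`- or `A_∞`-)algebra. -/
abbrev Ops (k A : Type) [CommRing k] [AddCommGroup A] [Module k A] :=
  ∀ n : ℕ, MultilinearMap k (fun _ : Fin n => A) A

/-- The structure maps of a morphism of (`A_N`- or `A_∞`-)algebras. -/
abbrev MorMaps (k A B : Type) [CommRing k] [AddCommGroup A] [Module k A]
    [AddCommGroup B] [Module k B] :=
  ∀ n : ℕ, MultilinearMap k (fun _ : Fin n => A) B

variable {k A B M N : Type} [CommRing k] [AddCommGroup A] [Module k A]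
  [AddCommGroup B] [Module k B]

/-- Insert the `s`-ary operation `m s` at position `r` of an argument sequence. -/
def inner (m : Ops k A) (r s : ℕ) (a : ℕ → A) : ℕ → A := fun i =>
  if i < r then a i
  else if i = r then m s (fun j : Fin s => a (r + (j : ℕ)))
  else a (i + s - 1)

/-- The left-hand side of the `n`-th Stasheff identity `SI(n)`,
`∑_{r+s+t=n} (-1)^{r+st} m_{r+1+t} ∘ (id^r ⊗ m_s ⊗ id^t)`, evaluated at `a`. -/
def SIsum (m : Ops k A) (n : ℕ) (a : ℕ → A) : A :=
  ∑ r ∈ Finset.range (n+1), ∑ s ∈ Finset.range (n+1), ∑ t ∈ Finset.range (n+1),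
    (if r + s + t = n ∧ 1 ≤ s then
      ((-1 : ℤ)^(r + s*t)) • (m (r+1+t) (fun i : Fin (r+1+t) => inner m r s a (i : ℕ)))
    else 0)

/-- The `n`-th Stasheff identity. -/
def SI (m : Ops k A) (n : ℕ) : Prop := ∀ a : ℕ → A, SIsum m n a = 0

def offset {q : ℕ} (ι : Fin q → ℕ) (j : Fin q) : ℕ :=
  ∑ x ∈ Finset.univ.filter (fun x : Fin q => (x : ℕ) < (j : ℕ)), ι x

/-- The left-hand side of the `n`-th morphism identity `MI(n)` for `f : A → B`. -/
def MIlhs (mA : Ops k A) (f : MorMaps k A B) (n : ℕ) (a : ℕ → A) : B :=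
  ∑ r ∈ Finset.range (n+1), ∑ s ∈ Finset.range (n+1), ∑ t ∈ Finset.range (n+1),
    (if r + s + t = n ∧ 1 ≤ s then
      ((-1 : ℤ)^(r + s*t)) • (f (r+1+t) (fun i : Fin (r+1+t) => inner mA r s a (i : ℕ)))
    else 0)

/-- The right-hand side of the `n`-th morphism identity `MI(n)`:
`∑_q ∑_{i₁+⋯+i_q = n} (-1)^w m_q^B ∘ (f_{i₁} ⊗ ⋯ ⊗ f_{i_q})` evaluated at `a`. -/
def MIrhs (mB : Ops k B) (f : MorMaps k A B) (n : ℕ) (a : ℕ → A) : B :=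
  ∑ q ∈ Finset.range (n+1),
    (Finset.univ : Finset (Fin q → Fin (n+1))).sum (fun ι =>
      (if (∑ j, ((ι j : ℕ))) = n ∧ (∀ j, 1 ≤ ((ι j : ℕ))) then
        ((-1 : ℤ)^(∑ j : Fin q, (q - 1 - (j : ℕ)) * ((ι j : ℕ) - 1))) •
          (mB q (fun j : Fin q => f ((ι j : ℕ)) (fun l : Fin ((ι j : ℕ)) =>
            a (offset (fun x => ((ι x : ℕ))) j + (l : ℕ)))))
      else 0))

/-- The `n`-th morphism (Stasheff) identity `MI(n)`. -/
def MI (mA : Ops k A) (mB : Ops k B) (f : MorMaps k A B) (n : ℕ) : Prop :=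
  ∀ a : ℕ → A, MIlhs mA f n a = MIrhs mB f n a

/-- `g` is a quasi-isomorphism of complexes from `(M, dM)` to `(N, dN)`. -/
def QIso {M N : Type} [AddCommGroup M] [AddCommGroup N]
    (dM : M → M) (dN : N → N) (g : M → N) : Prop :=
  (∀ x, g (dM x) = dN (g x)) ∧
  (∀ x, dM x = 0 → (∃ y, g x = dN y) → ∃ z, x = dM z) ∧
  (∀ y, dN y = 0 → ∃ x z, dM x = 0 ∧ y = g x + dN z)

/-- Homogeneity of the structure maps with respect to a bigrading:
`m_n` has bidegree `deg n`. -/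
def Homog2 {k M : Type} [CommRing k] [AddCommGroup M] [Module k M]
    (G : ℤ × ℤ → Submodule k M) (m : Ops k M) (deg : ℕ → ℤ × ℤ) : Prop :=
  ∀ (n : ℕ) (p : Fin n → ℤ × ℤ) (a : Fin n → M),
    (∀ i, a i ∈ G (p i)) → m n a ∈ G ((∑ i, p i) + deg n)

/-- Homogeneity of the components of a morphism with respect to bigradings. -/
def Homog2Mor {k M N : Type} [CommRing k] [AddCommGroup M] [Module k M]
    [AddCommGroup N] [Module k N]
    (GM : ℤ × ℤ → Submodule k M) (GN : ℤ × ℤ → Submodule k N)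
    (f : MorMaps k M N) (deg : ℕ → ℤ × ℤ) : Prop :=
  ∀ (n : ℕ) (p : Fin n → ℤ × ℤ) (a : Fin n → M),
    (∀ i, a i ∈ GM (p i)) → f n a ∈ GN ((∑ i, p i) + deg n)

/-- Homogeneity with respect to a single (cohomological) grading: `m_n` has degree `2 - n`. -/
def Homog1 {k M : Type} [CommRing k] [AddCommGroup M] [Module k M]
    (G : ℤ → Submodule k M) (m : Ops k M) : Prop :=
  ∀ (n : ℕ) (p : Fin n → ℤ) (a : Fin n → M),
    (∀ i, a i ∈ G (p i)) → m n a ∈ G ((∑ i, p i) + (2 - (n : ℤ)))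

/-- `e` is a strict unit for the structure maps `m`. -/
def IsStrictUnit {k A : Type} [CommRing k] [AddCommGroup A] [Module k A]
    (m : Ops k A) (e : A) : Prop :=
  (∀ a, m 2 ![e, a] = a) ∧ (∀ a, m 2 ![a, e] = a) ∧
  (∀ (n : ℕ), n ≠ 2 → ∀ (a : Fin n → A) (i : Fin n), a i = e → m n a = 0)

/-- The underlying differential of an `A_∞`-structure. -/
def unary {k M : Type} [CommRing k] [AddCommGroup M] [Module k M] (m : Ops k M) : M → M :=
  fun x => m 1 (fun _ => x)

/-- `(M, ℬ, h, ι, mM)` is a formal bigraded deformation of the `A_∞`-algebra `(A, 𝒜, mA)`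
with compatible bigrading of `s`-th type.  Here `h` is the action of `ħ` (of bidegree
`(-1,1)`), `ι` identifies `A` with the reduction modulo `ħ`, and `M` is `ħ`-topologically
free (torsion-free, separated, bigraded complete and split). -/
structure IsDefo (k : Type) [CommRing k] {A M : Type}
    [AddCommGroup A] [Module k A] [AddCommGroup M] [Module k M]
    (s : ℤ) (GA : ℤ × ℤ → Submodule k A) (mA : Ops k A)
    (GM : ℤ × ℤ → Submodule k M) (h : M →ₗ[k] M) (iota : A →ₗ[k] M) (mM : Ops k M) :
    Prop where
  internalM : DirectSum.IsInternal GM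
  hHom : ∀ (pq : ℤ × ℤ) (x : M), x ∈ GM pq → h x ∈ GM (pq.1 - 1, pq.2 + 1)
  torsionFree : Function.Injective h
  sep : (⨅ N : ℕ, LinearMap.range (h ^ N)) = ⊥
  complete : ∀ (pq : ℤ × ℤ) (x : ℕ → M), (∀ N, x N ∈ GM pq) →
      (∀ N, x (N+1) - x N ∈ LinearMap.range (h ^ N)) →
      ∃ y ∈ GM pq, ∀ N, y - x N ∈ LinearMap.range (h ^ N)
  iotaInj : Function.Injective iota
  iotaHom : ∀ (pq : ℤ × ℤ) (x : A), x ∈ GA pq → iota x ∈ GM pq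
  split : ∀ y : M, ∃ a b, y = iota a + h b
  mSI : ∀ n, 1 ≤ n → SI mM n
  mHomog : Homog2 GM mM (fun n => ((2 - (n : ℤ)) * s, (2 - (n : ℤ)) * (1 - s)))
  hLinear : ∀ (n : ℕ) (a : Fin n → M) (i : Fin n) (x : M),
      mM n (Function.update a i (h x)) = h (mM n (Function.update a i x))
  reduce : ∀ (n : ℕ) (a : Fin n → A),
      mM n (fun i => iota (a i)) - iota (mA n a) ∈ LinearMap.range h

/-- `(f, ft)` is a morphism of formal bigraded deformations (of `s`-th type)
from the deformation `(MA, hA, ιA, mMA)` of `(A, mA)` to the deformation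
`(MB, hB, ιB, mMB)` of `(B, mB)`. -/
structure IsDefoMor (k : Type) [CommRing k] {A B MA MB : Type}
    [AddCommGroup A] [Module k A] [AddCommGroup B] [Module k B]
    [AddCommGroup MA] [Module k MA] [AddCommGroup MB] [Module k MB]
    (s : ℤ)
    (mA : Ops k A) (GMA : ℤ × ℤ → Submodule k MA)
    (hA : MA →ₗ[k] MA) (iotaA : A →ₗ[k] MA) (mMA : Ops k MA)
    (mB : Ops k B) (GMB : ℤ × ℤ → Submodule k MB)
    (hB : MB →ₗ[k] MB) (iotaB : B →ₗ[k] MB) (mMB : Ops k MB)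
    (f : MorMaps k A B) (ft : MorMaps k MA MB) : Prop where
  fMI : ∀ n, 1 ≤ n → MI mA mB f n
  ftMI : ∀ n, 1 ≤ n → MI mMA mMB ft n
  ftEquiv : ∀ (n : ℕ) (a : Fin n → MA) (i : Fin n) (x : MA),
      ft n (Function.update a i (hA x)) = hB (ft n (Function.update a i x))
  ftHomog : Homog2Mor GMA GMB ft (fun n => ((1 - (n : ℤ)) * s, (1 - (n : ℤ)) * (1 - s)))
  ftReduce : ∀ (n : ℕ) (a : Fin n → A),
      ft n (fun i => iotaA (a i)) - iotaB (f n a) ∈ LinearMap.range hB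

end Paper

namespace Paper

variable {k M : Type} [CommRing k] [AddCommGroup M] [Module k M]

lemma update_const (w z : M) :
    Function.update (fun _ : Fin 1 => w) 0 z = fun _ : Fin 1 => z := by
  funext i; fin_cases i; simp

lemma unary_add (m : MultilinearMap k (fun _ : Fin 1 => M) M) (x y : M) :
    m (fun _ => x + y) = m (fun _ => x) + m (fun _ => y) := by
  have h1 := m.map_update_add (fun _ : Fin 1 => x) 0 x y
  rw [update_const x (x + y), update_const x x, update_const x y] at h1
  exact h1

lemma unary_smul (m : MultilinearMap k (fun _ : Fin 1 => M) M) (c : k) (x : M) :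
    m (fun _ => c • x) = c • m (fun _ => x) := by
  have h1 := m.map_update_smul (fun _ : Fin 1 => x) 0 c x
  rw [update_const x (c • x), update_const x x] at h1
  exact h1

/-- The submodule `D(A_ħ) = {a ∈ A_ħ : m̃₁(a) ∈ ħ·A_ħ}` of a formal bigraded
deformation. -/
def Dsub (h : M →ₗ[k] M) (mM : Ops k M) : Submodule k M where
  carrier := {x | mM 1 (fun _ => x) ∈ LinearMap.range h}
  add_mem' := by
    intro a b ha hb
    simp only [Set.mem_setOf_eq] at ha hb ⊢
    rw [unary_add]
    exact Submodule.add_mem _ ha hb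
  zero_mem' := by
    simp only [Set.mem_setOf_eq]
    rw [(mM 1).map_coord_zero (0 : Fin 1) rfl]
    exact Submodule.zero_mem _
  smul_mem' := by
    intro c a ha
    simp only [Set.mem_setOf_eq] at ha ⊢
    rw [unary_smul]
    exact Submodule.smul_mem _ _ ha

set_option linter.unusedSectionVars false

section Helpers

/-- `m₁` as a linear map. -/
def m1lin (mM : Ops k M) : M →ₗ[k] M where
  toFun x := mM 1 (fun _ => x)
  map_add' := unary_add (mM 1)
  map_smul' := unary_smul (mM 1)

lemma m1lin_apply (mM : Ops k M) (x : M) : m1lin mM x = mM 1 (fun _ => x) := rfl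

lemma mem_Dsub {h : M →ₗ[k] M} {mM : Ops k M} {x : M} :
    x ∈ Dsub h mM ↔ m1lin mM x ∈ LinearMap.range h := Iff.rfl

lemma fin1_const {α : Type*} (f : Fin 1 → α) : (fun _ : Fin 1 => f 0) = f :=
  funext fun i => by rw [Subsingleton.elim i 0]

lemma pow_apply_succ (h : M →ₗ[k] M) (N : ℕ) (x : M) :
    (h ^ (N + 1)) x = h ((h ^ N) x) := by
  rw [pow_succ', Module.End.mul_apply]

lemma pow_apply_zero (h : M →ₗ[k] M) (x : M) : (h ^ 0) x = x := by
  rw [pow_zero, Module.End.one_apply]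

lemma pow_inj {h : M →ₗ[k] M} (hinj : Function.Injective h) (N : ℕ) :
    Function.Injective (h ^ N : M →ₗ[k] M) := by
  induction N with
  | zero => intro x y hxy; rwa [pow_apply_zero, pow_apply_zero] at hxy
  | succ N ih =>
      intro x y hxy
      rw [pow_apply_succ, pow_apply_succ] at hxy
      exact ih (hinj hxy)

lemma coe_update {ι : Type*} [DecidableEq ι] {p : Submodule k M} (a : ι → p) (j : ι) (z : p) :
    (fun i => ((Function.update a j z i : M))) =
      Function.update (fun i => (a i : M)) j (z : M) := by
  funext i
  by_cases hij : i = j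
  · subst hij; simp
  · simp [Function.update_apply, hij]

end Helpers

section Dec

open scoped Classical DirectSum

variable (G : ℤ × ℤ → Submodule k M)

/-- The decomposition isomorphism of an internal direct sum. -/
noncomputable def dec (int : DirectSum.IsInternal G) : M ≃ₗ[k] ⨁ pq, G pq :=
  (LinearEquiv.ofBijective (DirectSum.coeLinearMap G) int).symm

lemma dec_symm_apply (int : DirectSum.IsInternal G) (d : ⨁ pq, G pq) :
    (dec G int).symm d = DirectSum.coeLinearMap G d := rfl

lemma dec_of (int : DirectSum.IsInternal G) {pq : ℤ × ℤ} {y : M} (hy : y ∈ G pq) :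
    dec G int y = DirectSum.of (fun pq => G pq) pq ⟨y, hy⟩ := by
  apply (dec G int).symm.injective
  rw [LinearEquiv.symm_apply_apply, dec_symm_apply, DirectSum.coeLinearMap_of]

lemma dec_sum (int : DirectSum.IsInternal G) (x : M) :
    ∑ pq ∈ (dec G int x).support, ((dec G int x pq : M)) = x := by
  conv_rhs => rw [← (dec G int).symm_apply_apply x, dec_symm_apply,
    ← DirectSum.sum_support_of (dec G int x)]
  rw [map_sum]
  exact (Finset.sum_congr rfl fun pq _ => (DirectSum.coeLinearMap_of G pq _).symm)

lemma dec_eq_zero_of_ne (int : DirectSum.IsInternal G) {r : ℤ × ℤ} {x : M}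
    (hx : x ∈ G r) {pq : ℤ × ℤ} (hne : pq ≠ r) :
    dec G int x pq = 0 := by
  rw [dec_of G int hx, DirectSum.of_eq_of_ne _ _ _ hne]

lemma dec_map (int : DirectSum.IsInternal G) (f : M →ₗ[k] M) {σ : ℤ × ℤ → ℤ × ℤ}
    (hσ : Function.Injective σ) (hf : ∀ pq : ℤ × ℤ, ∀ y ∈ G pq, f y ∈ G (σ pq))
    (x : M) (pq : ℤ × ℤ) :
    ((dec G int (f x)) (σ pq) : M) = f ((dec G int x) pq : M) := by
  have h1 : dec G int (f x) = ∑ pq' ∈ (dec G int x).support,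
      DirectSum.of (fun r => G r) (σ pq')
        ⟨f ((dec G int x) pq' : M), hf pq' _ (dec G int x pq').2⟩ := by
    have hfx : f x = ∑ pq' ∈ (dec G int x).support, f ((dec G int x) pq' : M) := by
      rw [← map_sum, dec_sum]
    rw [hfx, map_sum]
    exact Finset.sum_congr rfl fun pq' _ => dec_of G int _
  rw [h1, DFinsupp.finset_sum_apply]
  by_cases hmem : pq ∈ (dec G int x).support
  · rw [Finset.sum_eq_single_of_mem pq hmem ?h]
    · rw [DirectSum.of_eq_same]
    · intro b _ hb
      exact DirectSum.of_eq_of_ne _ _ _ (fun hc => hb (hσ hc.symm))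
  · have hz : (dec G int x) pq = 0 := DFinsupp.notMem_support_iff.mp hmem
    rw [Finset.sum_eq_zero, hz]
    · simp
    · intro b hb
      refine DirectSum.of_eq_of_ne _ _ _ (fun hc => ?_)
      exact hmem ((hσ hc.symm) ▸ hb)

lemma shift_inj : Function.Injective (fun pq : ℤ × ℤ => (pq.1 - 1, pq.2 + 1)) := by
  intro a b hab
  simp only [Prod.mk.injEq] at hab
  exact Prod.ext (by omega) (by omega)

lemma mem_of_h_mem (int : DirectSum.IsInternal G) {h : M →ₗ[k] M}
    (hinj : Function.Injective h)
    (hh : ∀ pq : ℤ × ℤ, ∀ y ∈ G pq, h y ∈ G (pq.1 - 1, pq.2 + 1))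
    {x : M} {p q : ℤ} (hx : h x ∈ G (p - 1, q + 1)) : x ∈ G (p, q) := by
  have hcomp : ∀ pq : ℤ × ℤ, pq ≠ (p, q) → ((dec G int x) pq : M) = 0 := by
    intro pq hne
    have h1 : ((dec G int (h x)) ((pq.1 - 1, pq.2 + 1)) : M) = h ((dec G int x) pq : M) :=
      dec_map G int h shift_inj hh x pq
    have h2 : (dec G int (h x)) (pq.1 - 1, pq.2 + 1) = 0 := by
      refine dec_eq_zero_of_ne G int hx (fun hc => hne ?_)
      simp only [Prod.mk.injEq] at hc
      exact Prod.ext (by omega) (by omega)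
    apply hinj
    rw [← h1, h2]
    simp
  rw [← dec_sum G int x]
  apply Submodule.sum_mem
  intro pq hpq
  by_cases hpq' : pq = (p, q)
  · subst hpq'; exact (dec G int x (p, q)).2
  · rw [hcomp pq hpq']; exact Submodule.zero_mem _

lemma dec_mem_range (int : DirectSum.IsInternal G) {h : M →ₗ[k] M}
    (hh : ∀ pq : ℤ × ℤ, ∀ y ∈ G pq, h y ∈ G (pq.1 - 1, pq.2 + 1))
    {z : M} (hz : z ∈ LinearMap.range h) (r : ℤ × ℤ) :
    ((dec G int z) r : M) ∈ LinearMap.range h := by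
  obtain ⟨w, rfl⟩ := hz
  have hr : r = ((r.1 + 1) - 1, (r.2 - 1) + 1) := by
    exact Prod.ext (by omega) (by omega)
  rw [hr]
  rw [show ((r.1 + 1) - 1, (r.2 - 1) + 1) =
    (fun pq : ℤ × ℤ => (pq.1 - 1, pq.2 + 1)) ((r.1 + 1), (r.2 - 1)) from rfl]
  rw [dec_map G int h shift_inj hh w (r.1 + 1, r.2 - 1)]
  exact ⟨_, rfl⟩

end Dec


section SIx

variable (mM : Ops k M)

lemma SI1_eq (hSI : SI mM 1) (x : M) : m1lin mM (m1lin mM x) = 0 := by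
  have h0 := hSI (fun _ => x)
  simp only [SIsum, Finset.sum_range_succ, Finset.sum_range_zero] at h0
  norm_num at h0
  simpa [inner, m1lin_apply] using h0

variable (h : M →ₗ[k] M)

lemma hlin_update_pow
    (hLin : ∀ (n : ℕ) (a : Fin n → M) (i : Fin n) (x : M),
      mM n (Function.update a i (h x)) = h (mM n (Function.update a i x)))
    (N n : ℕ) (a : Fin n → M) (i : Fin n) (x : M) :
    mM n (Function.update a i ((h ^ N) x)) = (h ^ N) (mM n (Function.update a i x)) := by
  induction N with
  | zero => rw [pow_apply_zero, pow_apply_zero]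
  | succ N ih =>
      rw [pow_apply_succ, hLin, ih, pow_apply_succ]

lemma slot_pull
    (hLin : ∀ (n : ℕ) (a : Fin n → M) (i : Fin n) (x : M),
      mM n (Function.update a i (h x)) = h (mM n (Function.update a i x)))
    (N n : ℕ) (a : Fin n → M) (i : Fin n) (x : M) (hx : a i = (h ^ N) x) :
    mM n a = (h ^ N) (mM n (Function.update a i x)) := by
  conv_lhs => rw [← Function.update_eq_self i a, hx]
  exact hlin_update_pow mM h hLin N n a i x

lemma SI2_mem (hSI : SI mM 2)
    (hLin : ∀ (n : ℕ) (a : Fin n → M) (i : Fin n) (x : M),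
      mM n (Function.update a i (h x)) = h (mM n (Function.update a i x)))
    (a : Fin 2 → M) (ha : ∀ i, mM 1 (fun _ => a i) ∈ LinearMap.range h) :
    mM 1 (fun _ => mM 2 a) ∈ LinearMap.range h := by
  have h0 := hSI (fun i => if i = 0 then a 0 else a 1)
  simp only [SIsum, Finset.sum_range_succ, Finset.sum_range_zero] at h0
  norm_num at h0
  obtain ⟨b0, hb0⟩ := ha 0
  obtain ⟨b1, hb1⟩ := ha 1
  have h0' : -(mM 2 (fun i : Fin 2 => inner mM 0 1 (fun i => if i = 0 then a 0 else a 1) ↑i))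
      + mM 1 (fun i : Fin 1 => inner mM 0 2 (fun i => if i = 0 then a 0 else a 1) 0)
      + -(mM 2 (fun i : Fin 2 => inner mM 1 1 (fun i => if i = 0 then a 0 else a 1) ↑i)) = 0 := h0
  have e0 : inner mM 0 1 (fun i : ℕ => if i = 0 then a 0 else a 1) 0 = h b0 := by
    rw [hb0, show inner mM 0 1 (fun i : ℕ => if i = 0 then a 0 else a 1) 0
      = mM 1 (fun j : Fin 1 => if (0 + (j : ℕ)) = 0 then a 0 else a 1) from rfl]
    congr 1
    funext j
    simp [Subsingleton.elim j 0]
  have e1 : inner mM 1 1 (fun i : ℕ => if i = 0 then a 0 else a 1) 1 = h b1 := by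
    rw [hb1, show inner mM 1 1 (fun i : ℕ => if i = 0 then a 0 else a 1) 1
      = mM 1 (fun j : Fin 1 => if (1 + (j : ℕ)) = 0 then a 0 else a 1) from rfl]
    congr 1
    funext j
    simp [Subsingleton.elim j 0]
  have hc1 : (fun i : Fin 2 => inner mM 0 1 (fun i => if i = 0 then a 0 else a 1) ↑i)
      = Function.update a 0 (h b0) := by
    funext i
    by_cases hi : i = 0
    · subst hi
      simp only [Fin.val_zero, Function.update_self]
      exact e0
    · have hi1 : i = 1 := by
        have := i.isLt
        have := Fin.val_ne_of_ne hi
        exact Fin.ext (by simp at this ⊢; omega)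
      subst hi1
      simp only [Fin.val_one]
      rw [Function.update_of_ne hi]
      rw [show inner mM 0 1 (fun i : ℕ => if i = 0 then a 0 else a 1) 1
        = (if (1 + 1 - 1 : ℕ) = 0 then a 0 else a 1) from rfl]
      norm_num
  have hc3 : (fun i : Fin 2 => inner mM 1 1 (fun i => if i = 0 then a 0 else a 1) ↑i)
      = Function.update a 1 (h b1) := by
    funext i
    by_cases hi : i = 1
    · subst hi
      simp only [Fin.val_one, Function.update_self]
      exact e1
    · have hi0 : i = 0 := by
        have := i.isLt
        have := Fin.val_ne_of_ne hi
        exact Fin.ext (by simp at this ⊢; omega)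
      subst hi0
      simp only [Fin.val_zero]
      rw [Function.update_of_ne hi]
      rw [show inner mM 1 1 (fun i : ℕ => if i = 0 then a 0 else a 1) 0
        = (if (0 : ℕ) = 0 then a 0 else a 1) from rfl]
      norm_num
  have hc2 : (fun i : Fin 1 => inner mM 0 2 (fun i => if i = 0 then a 0 else a 1) 0)
      = (fun _ : Fin 1 => mM 2 a) := by
    funext i
    rw [show inner mM 0 2 (fun i : ℕ => if i = 0 then a 0 else a 1) 0
      = mM 2 (fun j : Fin 2 => if (0 + (j : ℕ)) = 0 then a 0 else a 1) from rfl]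
    congr 1
    funext j
    by_cases hj : j = 0
    · subst hj; simp
    · have hj1 : j = 1 := by
        have := j.isLt
        have := Fin.val_ne_of_ne hj
        exact Fin.ext (by simp at this ⊢; omega)
      subst hj1; simp
  rw [hc1, hc2, hc3] at h0'
  have hz : mM 1 (fun _ : Fin 1 => mM 2 a)
      = mM 2 (Function.update a 0 (h b0)) + mM 2 (Function.update a 1 (h b1)) := by
    rw [← sub_eq_zero, ← h0']
    abel
  rw [hz, hLin 2 a 0 b0, hLin 2 a 1 b1]
  exact Submodule.add_mem _ ⟨_, rfl⟩ ⟨_, rfl⟩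

end SIx


section Main

variable {A : Type} [AddCommGroup A] [Module k A]
variable {s : ℤ} {GA : ℤ × ℤ → Submodule k A} {mA : Ops k A}
  {GM : ℤ × ℤ → Submodule k M} {h : M →ₗ[k] M} {iota : A →ₗ[k] M} {mM : Ops k M}

lemma hLin1 (hdef : IsDefo k s GA mA GM h iota mM) (x : M) :
    m1lin mM (h x) = h (m1lin mM x) := by
  have := hdef.hLinear 1 (fun _ => x) 0 x
  rwa [update_const, update_const] at this

lemma m1_m1 (hdef : IsDefo k s GA mA GM h iota mM) (x : M) :
    m1lin mM (m1lin mM x) = 0 := SI1_eq mM (hdef.mSI 1 le_rfl) x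

lemma mem_D_of_unary (hdef : IsDefo k s GA mA GM h iota mM) {x b : M}
    (hb : m1lin mM x = h b) : b ∈ Dsub h mM := by
  rw [mem_Dsub]
  have h2 : h (m1lin mM b) = h 0 := by
    rw [← hLin1 hdef, ← hb, m1_m1 hdef, map_zero]
  rw [hdef.torsionFree h2]
  exact Submodule.zero_mem _

lemma closD (hdef : IsDefo k s GA mA GM h iota mM) (N : ℕ) (a : Fin (N + 2) → M)
    (ha : ∀ i, a i ∈ Dsub h mM) : (h ^ N) (mM (N + 2) a) ∈ Dsub h mM := by
  cases N with
  | zero =>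
      rw [mem_Dsub, pow_apply_zero, m1lin_apply]
      exact SI2_mem mM h (hdef.mSI 2 (by norm_num)) hdef.hLinear a
        (fun i => mem_Dsub.mp (ha i))
  | succ N =>
      rw [mem_Dsub, pow_apply_succ, hLin1 hdef]
      exact ⟨_, rfl⟩

lemma h_mem_D (hdef : IsDefo k s GA mA GM h iota mM) {x : M} (hx : x ∈ Dsub h mM) :
    h x ∈ Dsub h mM := by
  rw [mem_Dsub, hLin1 hdef]
  exact ⟨_, rfl⟩

/-- The map `ħ` restricted to `D(A_ħ)`. -/
noncomputable def hD (hdef : IsDefo k s GA mA GM h iota mM) :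
    ↥(Dsub h mM) →ₗ[k] ↥(Dsub h mM) :=
  h.restrict (fun _ hx => h_mem_D hdef hx)

lemma hD_apply (hdef : IsDefo k s GA mA GM h iota mM) (x : ↥(Dsub h mM)) :
    (hD hdef x : M) = h (x : M) := rfl

lemma hD_pow (hdef : IsDefo k s GA mA GM h iota mM) (N : ℕ) (x : ↥(Dsub h mM)) :
    ((hD hdef ^ N) x : M) = (h ^ N) (x : M) := by
  induction N with
  | zero => rw [pow_apply_zero, pow_apply_zero]
  | succ N ih => rw [pow_apply_succ, pow_apply_succ, ← ih, hD_apply]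

/-- `m̃₁^D = ħ^{-1} m̃₁` on `D(A_ħ)`. -/
noncomputable def d1 (hdef : IsDefo k s GA mA GM h iota mM) (x : ↥(Dsub h mM)) :
    ↥(Dsub h mM) :=
  ⟨(LinearMap.mem_range.mp (mem_Dsub.mp x.2)).choose,
   mem_D_of_unary hdef
     ((LinearMap.mem_range.mp (mem_Dsub.mp x.2)).choose_spec.symm)⟩

lemma hd1 (hdef : IsDefo k s GA mA GM h iota mM) (x : ↥(Dsub h mM)) :
    h ((d1 hdef x : M)) = m1lin mM (x : M) :=
  (LinearMap.mem_range.mp (mem_Dsub.mp x.2)).choose_spec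

lemma d1_eq (hdef : IsDefo k s GA mA GM h iota mM) {x : ↥(Dsub h mM)} {b : M}
    (hb : h b = m1lin mM (x : M)) : ((d1 hdef x : M)) = b :=
  hdef.torsionFree (by rw [hd1 hdef, hb])

lemma d1_add (hdef : IsDefo k s GA mA GM h iota mM) (x y : ↥(Dsub h mM)) :
    d1 hdef (x + y) = d1 hdef x + d1 hdef y := by
  apply Subtype.ext
  apply hdef.torsionFree
  rw [hd1 hdef]
  push_cast
  rw [map_add, map_add, hd1 hdef, hd1 hdef]

lemma d1_smul (hdef : IsDefo k s GA mA GM h iota mM) (c : k) (x : ↥(Dsub h mM)) :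
    d1 hdef (c • x) = c • d1 hdef x := by
  apply Subtype.ext
  apply hdef.torsionFree
  rw [hd1 hdef]
  push_cast
  rw [map_smul, map_smul, hd1 hdef]

/-- The structure maps `m̃_i^D = ħ^{i-2} m̃_i` of `D(A_ħ)`. -/
noncomputable def mD (hdef : IsDefo k s GA mA GM h iota mM) : Ops k ↥(Dsub h mM)
  | 0 => 0
  | 1 =>
    { toFun := fun a => d1 hdef (a 0)
      map_update_add' := by
        intro _ m i x y
        rw [Subsingleton.elim i 0]
        simp only [Function.update_self]
        exact d1_add hdef x y
      map_update_smul' := by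
        intro _ m i c x
        rw [Subsingleton.elim i 0]
        simp only [Function.update_self]
        exact d1_smul hdef c x }
  | (N+2) =>
    { toFun := fun a => ⟨(h ^ N) (mM (N+2) (fun i => ((a i : M)))),
        closD hdef N _ (fun i => (a i).2)⟩
      map_update_add' := by
        intro _ m i x y
        apply Subtype.ext
        push_cast
        rw [coe_update, coe_update, coe_update]
        push_cast
        rw [(mM (N+2)).map_update_add, map_add]
      map_update_smul' := by
        intro _ m i c x
        apply Subtype.ext
        push_cast
        rw [coe_update, coe_update]
        push_cast
        rw [(mM (N+2)).map_update_smul, map_smul]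
      }

lemma mD_one (hdef : IsDefo k s GA mA GM h iota mM) (a : Fin 1 → ↥(Dsub h mM)) :
    mD hdef 1 a = d1 hdef (a 0) := rfl

lemma mD_ge2 (hdef : IsDefo k s GA mA GM h iota mM) (N : ℕ)
    (a : Fin (N+2) → ↥(Dsub h mM)) :
    ((mD hdef (N+2) a : M)) = (h ^ N) (mM (N+2) (fun i => ((a i : M)))) := rfl

end Main


section Main2

variable {A : Type} [AddCommGroup A] [Module k A]
variable {s : ℤ} {GA : ℤ × ℤ → Submodule k A} {mA : Ops k A}
  {GM : ℤ × ℤ → Submodule k M} {h : M →ₗ[k] M} {iota : A →ₗ[k] M} {mM : Ops k M}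

lemma pow_apply_succ' (h : M →ₗ[k] M) (N : ℕ) (x : M) :
    (h ^ (N + 1)) x = (h ^ N) (h x) := by
  rw [pow_succ, Module.End.mul_apply]

lemma pow_add_apply (h : M →ₗ[k] M) (i j : ℕ) (x : M) :
    (h ^ (i + j)) x = (h ^ i) ((h ^ j) x) := by
  rw [pow_add, Module.End.mul_apply]

lemma hD_coe_mD (hdef : IsDefo k s GA mA GM h iota mM) (o : ℕ) (ho : 1 ≤ o)
    (c : Fin o → ↥(Dsub h mM)) :
    h ((mD hdef o c : M)) = (h ^ (o - 1)) (mM o (fun i => ((c i : M)))) := by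
  match o, ho with
  | 1, _ =>
    show h ((d1 hdef (c 0) : M)) = (h ^ 0) (mM 1 (fun i => ((c i : M))))
    rw [hd1 hdef, pow_apply_zero, m1lin_apply]
    exact congrArg _ (fin1_const (fun i => ((c i : M))))
  | (N+2), _ =>
    show h ((h ^ N) (mM (N+2) (fun i => ((c i : M)))))
      = (h ^ (N + 1)) (mM (N+2) (fun i => ((c i : M))))
    rw [pow_apply_succ]

lemma inner_at_r (m : Ops k M) (r sx : ℕ) (b : ℕ → M) :
    inner m r sx b r = m sx (fun j : Fin sx => b (r + (j : ℕ))) := by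
  unfold inner
  rw [if_neg (lt_irrefl r), if_pos rfl]

lemma inner_at_rD (hdef : IsDefo k s GA mA GM h iota mM) (r sx : ℕ)
    (b : ℕ → ↥(Dsub h mM)) :
    inner (mD hdef) r sx b r = mD hdef sx (fun j : Fin sx => b (r + (j : ℕ))) := by
  unfold inner
  rw [if_neg (lt_irrefl r), if_pos rfl]

lemma inner_coe (hdef : IsDefo k s GA mA GM h iota mM) (r sx t : ℕ) (a : ℕ → ↥(Dsub h mM)) :
    (fun i : Fin (r+1+t) => (((inner (mD hdef) r sx a (i : ℕ) : ↥(Dsub h mM)) : M))) =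
    Function.update
      (fun i : Fin (r+1+t) => inner mM r sx (fun j => ((a j : M))) (i : ℕ))
      ⟨r, by omega⟩
      ((mD hdef sx (fun j : Fin sx => a (r + (j : ℕ))) : M)) := by
  funext i
  rw [Function.update_apply]
  by_cases hi : (i : ℕ) = r
  · rw [if_pos (Fin.ext hi), hi, inner_at_rD hdef]
  · rw [if_neg (fun hc => hi (congrArg Fin.val hc))]
    unfold inner
    by_cases hlt : (i : ℕ) < r
    · rw [if_pos hlt, if_pos hlt]
    · rw [if_neg hlt, if_neg hi, if_neg hlt, if_neg hi]

lemma slot_mD (hdef : IsDefo k s GA mA GM h iota mM) (o sx : ℕ) (hs : 1 ≤ sx)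
    (c : Fin o → M) (j : Fin o) (W : Fin sx → ↥(Dsub h mM)) :
    h (mM o (Function.update c j ((mD hdef sx W : M)))) =
      (h ^ (sx - 1)) (mM o (Function.update c j (mM sx (fun l => ((W l : M)))))) := by
  match sx, hs with
  | 1, _ =>
    have hval : m1lin mM ((W 0 : M)) = mM 1 (fun l => ((W l : M))) := by
      rw [m1lin_apply]
      exact congrArg _ (fin1_const (fun l => ((W l : M))))
    show h (mM o (Function.update c j ((d1 hdef (W 0) : M)))) = (h ^ 0) _
    rw [← hdef.hLinear o c j, hd1 hdef, hval, pow_apply_zero]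
  | (N+2), _ =>
    show h (mM o (Function.update c j ((h ^ N) (mM (N+2) (fun l => ((W l : M)))))))
      = (h ^ (N + 1)) (mM o (Function.update c j (mM (N+2) (fun l => ((W l : M))))))
    rw [hlin_update_pow mM h hdef.hLinear N, ← pow_apply_succ]

lemma inner_update (r sx t : ℕ) (mm : Ops k M) (b : ℕ → M) :
    Function.update (fun i : Fin (r+1+t) => inner mm r sx b (i : ℕ)) ⟨r, by omega⟩
      (mm sx (fun j : Fin sx => b (r + (j : ℕ))))
      = fun i : Fin (r+1+t) => inner mm r sx b (i : ℕ) := by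
  rw [← inner_at_r mm r sx b]
  exact Function.update_eq_self _ _

lemma term_eq (hdef : IsDefo k s GA mA GM h iota mM) (n r sx t : ℕ)
    (hn : r + sx + t = n) (hs : 1 ≤ sx) (a : ℕ → ↥(Dsub h mM)) :
    h (h ((mD hdef (r+1+t) (fun i : Fin (r+1+t) => inner (mD hdef) r sx a (i : ℕ)) : M)))
      = (h ^ (n - 1))
        (mM (r+1+t) (fun i : Fin (r+1+t) =>
          inner mM r sx (fun j => ((a j : M))) (i : ℕ))) := by
  have ho : 1 ≤ r + 1 + t := by omega
  rw [hD_coe_mD hdef _ ho, inner_coe hdef r sx t a]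
  rw [← pow_apply_succ, pow_apply_succ']
  rw [slot_mD hdef _ sx hs _ _ _]
  rw [inner_update r sx t mM]
  rw [← pow_add_apply, show (r + 1 + t - 1) + (sx - 1) = n - 1 from by omega]

lemma SI_mD (hdef : IsDefo k s GA mA GM h iota mM) (n : ℕ) (hn : 1 ≤ n) :
    SI (mD hdef) n := by
  intro a
  have key : (h ∘ₗ (h ∘ₗ (Dsub h mM).subtype)) (SIsum (mD hdef) n a)
      = (h ^ (n - 1)) (SIsum mM n (fun j => ((a j : M)))) := by
    simp only [SIsum]
    rw [map_sum, map_sum]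
    refine Finset.sum_congr rfl fun r _ => ?_
    rw [map_sum, map_sum]
    refine Finset.sum_congr rfl fun sx _ => ?_
    rw [map_sum, map_sum]
    refine Finset.sum_congr rfl fun t _ => ?_
    by_cases hc : r + sx + t = n ∧ 1 ≤ sx
    · rw [if_pos hc, if_pos hc, map_zsmul, map_zsmul]
      exact congrArg _ (term_eq hdef n r sx t hc.1 hc.2 a)
    · rw [if_neg hc, if_neg hc, map_zero, map_zero]
  rw [hdef.mSI n hn (fun j => ((a j : M))), map_zero] at key
  have key2 : h (h (((SIsum (mD hdef) n a : ↥(Dsub h mM)) : M))) = h (h (0 : M)) := by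
    rw [map_zero, map_zero]
    exact key
  exact Subtype.ext (hdef.torsionFree (hdef.torsionFree key2))

end Main2


section Main3

variable {A : Type} [AddCommGroup A] [Module k A]
variable {s : ℤ} {GA : ℤ × ℤ → Submodule k A} {mA : Ops k A}
  {GM : ℤ × ℤ → Submodule k M} {h : M →ₗ[k] M} {iota : A →ₗ[k] M} {mM : Ops k M}

lemma hpow_mem (hdef : IsDefo k s GA mA GM h iota mM) (N : ℕ) {pq : ℤ × ℤ} {x : M}
    (hx : x ∈ GM pq) : (h ^ N) x ∈ GM (pq.1 - N, pq.2 + N) := by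
  induction N with
  | zero =>
      rw [pow_apply_zero]
      have : (pq.1 - ((0:ℕ):ℤ), pq.2 + ((0:ℕ):ℤ)) = pq := by
        apply Prod.ext <;> push_cast <;> simp
      rw [this]
      exact hx
  | succ N ih =>
      rw [pow_apply_succ]
      have h1 := hdef.hHom _ _ ih
      have : ((pq.1 - (N:ℤ)) - 1, (pq.2 + (N:ℤ)) + 1)
          = (pq.1 - ((N+1:ℕ):ℤ), pq.2 + ((N+1:ℕ):ℤ)) := by
        apply Prod.ext <;> push_cast <;> ring
      rw [← this]
      exact h1

lemma m1_hom (hdef : IsDefo k s GA mA GM h iota mM) (pq : ℤ × ℤ) (y : M)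
    (hy : y ∈ GM pq) : m1lin mM y ∈ GM (pq.1 + s, pq.2 + (1 - s)) := by
  have h1 := hdef.mHomog 1 (fun _ => pq) (fun _ => y) (fun _ => hy)
  have hidx : ((∑ _i : Fin 1, pq) + ((2 - ((1:ℕ):ℤ)) * s, (2 - ((1:ℕ):ℤ)) * (1 - s)))
      = (pq.1 + s, pq.2 + (1 - s)) := by
    rw [Fin.sum_univ_one]
    apply Prod.ext <;> simp <;> push_cast <;> ring
  rw [m1lin_apply]
  rw [← hidx]
  exact h1

lemma sigma1_inj : Function.Injective (fun pq : ℤ × ℤ => (pq.1 + s, pq.2 + (1 - s))) := by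
  intro a b hab
  simp only [Prod.mk.injEq] at hab
  exact Prod.ext (by omega) (by omega)

lemma component_mem_D (hdef : IsDefo k s GA mA GM h iota mM) {x : M}
    (hx : x ∈ Dsub h mM) (r : ℤ × ℤ) :
    ((dec GM hdef.internalM x r : M)) ∈ Dsub h mM := by
  rw [mem_Dsub]
  have h1 : ((dec GM hdef.internalM (m1lin mM x))
        ((fun pq : ℤ × ℤ => (pq.1 + s, pq.2 + (1 - s))) r) : M)
      = m1lin mM ((dec GM hdef.internalM x r : M)) :=
    dec_map GM hdef.internalM (m1lin mM) sigma1_inj (m1_hom hdef) x r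
  rw [← h1]
  exact dec_mem_range GM hdef.internalM hdef.hHom (mem_Dsub.mp hx) _

lemma internal_comapD (hdef : IsDefo k s GA mA GM h iota mM) :
    DirectSum.IsInternal (fun pq => (GM pq).comap (Dsub h mM).subtype) := by
  classical
  apply DirectSum.isInternal_submodule_of_iSupIndep_of_iSup_eq_top
  · intro pq
    have hind := hdef.internalM.submodule_iSupIndep pq
    have h1 : (⨆ (j) (_ : j ≠ pq), (GM j).comap (Dsub h mM).subtype)
        ≤ ((⨆ (j) (_ : j ≠ pq), GM j)).comap (Dsub h mM).subtype := by
      refine iSup_le fun j => iSup_le fun hj => ?_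
      exact Submodule.comap_mono (le_iSup₂ (f := fun j (_ : j ≠ pq) => GM j) j hj)
    refine Disjoint.mono_right h1 ?_
    rw [disjoint_iff]
    rw [eq_bot_iff]
    intro v hv
    rw [Submodule.mem_bot]
    apply Subtype.ext
    have h2 : (v : M) ∈ GM pq ⊓ (⨆ (j) (_ : j ≠ pq), GM j) := hv
    rw [disjoint_iff.mp hind, Submodule.mem_bot] at h2
    exact h2
  · rw [eq_top_iff]
    rintro ⟨x, hxD⟩ _
    have hx : (⟨x, hxD⟩ : ↥(Dsub h mM)) = ∑ r ∈ (dec GM hdef.internalM x).support,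
        ⟨((dec GM hdef.internalM x r : M)), component_mem_D hdef hxD r⟩ := by
      apply Subtype.ext
      rw [AddSubmonoidClass.coe_finset_sum]
      exact (dec_sum GM hdef.internalM x).symm
    rw [hx]
    apply Submodule.sum_mem
    intro r _
    apply Submodule.mem_iSup_of_mem r
    exact (dec GM hdef.internalM x r).2

lemma mD_homog (hdef : IsDefo k s GA mA GM h iota mM) :
    Homog2 (fun pq => (GM pq).comap (Dsub h mM).subtype) (mD hdef)
      (fun n => ((2 - (n : ℤ)) * (s+1), (2 - (n : ℤ)) * (1 - (s+1)))) := by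
  intro n p a hp
  match n with
  | 0 =>
      have : mD hdef 0 a = 0 := rfl
      rw [this]
      exact Submodule.zero_mem _
  | 1 =>
      rw [Submodule.mem_comap]
      have h1 : h ((mD hdef 1 a : M)) = m1lin mM ((a 0 : M)) := by
        rw [mD_one]
        exact hd1 hdef (a 0)
      have h2 : m1lin mM ((a 0 : M)) ∈ GM ((p 0).1 + s, (p 0).2 + (1 - s)) :=
        m1_hom hdef _ _ (hp 0)
      have h3 : ((mD hdef 1 a : M))
          ∈ GM ((p 0).1 + s + 1, (p 0).2 + (1 - s) - 1) := by
        apply mem_of_h_mem GM hdef.internalM hdef.torsionFree hdef.hHom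
        rw [h1]
        have : ((p 0).1 + s + 1 - 1, (p 0).2 + (1 - s) - 1 + 1)
            = ((p 0).1 + s, (p 0).2 + (1 - s)) := by
          apply Prod.ext <;> simp <;> ring
        rw [this]
        exact h2
      have hidx : ((p 0).1 + s + 1, (p 0).2 + (1 - s) - 1)
          = ((∑ i : Fin 1, p i) + ((2 - ((1:ℕ):ℤ)) * (s+1), (2 - ((1:ℕ):ℤ)) * (1 - (s+1)))) := by
        rw [Fin.sum_univ_one]
        apply Prod.ext <;> simp <;> push_cast <;> ring
      rw [← hidx]
      exact h3
  | (N+2) =>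
      rw [Submodule.mem_comap]
      have h1 := hdef.mHomog (N+2) p (fun i => ((a i : M))) hp
      have h2 := hpow_mem hdef N h1
      have hidx : (((∑ i, p i) + ((2 - ((N+2:ℕ):ℤ)) * s, (2 - ((N+2:ℕ):ℤ)) * (1 - s))).1 - (N:ℤ),
          ((∑ i, p i) + ((2 - ((N+2:ℕ):ℤ)) * s, (2 - ((N+2:ℕ):ℤ)) * (1 - s))).2 + (N:ℤ))
          = ((∑ i, p i) + ((2 - ((N+2:ℕ):ℤ)) * (s+1), (2 - ((N+2:ℕ):ℤ)) * (1 - (s+1)))) := by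
        apply Prod.ext <;> simp <;> push_cast <;> ring
      rw [hidx] at h2
      exact h2

lemma mD_hlin (hdef : IsDefo k s GA mA GM h iota mM) :
    ∀ (n : ℕ) (a : Fin n → ↥(Dsub h mM)) (i : Fin n) (x : ↥(Dsub h mM)),
      mD hdef n (Function.update a i (hD hdef x))
        = hD hdef (mD hdef n (Function.update a i x)) := by
  intro n a i x
  match n with
  | 0 => exact i.elim0
  | 1 =>
      apply Subtype.ext
      apply hdef.torsionFree
      rw [Subsingleton.elim i 0]
      have e1 : Function.update a 0 (hD hdef x) 0 = hD hdef x := Function.update_self _ _ _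
      have e2 : Function.update a 0 x 0 = x := Function.update_self _ _ _
      rw [show mD hdef 1 (Function.update a 0 (hD hdef x)) = d1 hdef (hD hdef x) from by
        rw [mD_one, e1]]
      rw [show mD hdef 1 (Function.update a 0 x) = d1 hdef x from by rw [mD_one, e2]]
      rw [hd1 hdef, hD_apply, hD_apply, hLin1 hdef]
      rw [← hd1 hdef x]
  | (N+2) =>
      apply Subtype.ext
      rw [mD_ge2, show ((hD hdef (mD hdef (N+2) (Function.update a i x)) : M))
        = h ((mD hdef (N+2) (Function.update a i x) : M)) from rfl, mD_ge2]
      rw [coe_update, coe_update, hD_apply]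
      rw [hdef.hLinear, ← pow_apply_succ', pow_apply_succ]

lemma torsionFreeD (hdef : IsDefo k s GA mA GM h iota mM) :
    Function.Injective (hD hdef) := by
  intro x y hxy
  exact Subtype.ext (hdef.torsionFree (congrArg (fun z : ↥(Dsub h mM) => (z : M)) hxy))

lemma sepD (hdef : IsDefo k s GA mA GM h iota mM) :
    (⨅ N : ℕ, LinearMap.range ((hD hdef) ^ N)) = ⊥ := by
  rw [eq_bot_iff]
  intro x hx
  rw [Submodule.mem_bot]
  have hM : (x : M) ∈ (⨅ N : ℕ, LinearMap.range (h ^ N)) := by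
    rw [Submodule.mem_iInf]
    intro N
    obtain ⟨z, hz⟩ := (Submodule.mem_iInf _).mp hx N
    exact ⟨(z : M), by rw [← hD_pow hdef, hz]⟩
  rw [hdef.sep, Submodule.mem_bot] at hM
  exact Subtype.ext hM

lemma completeD (hdef : IsDefo k s GA mA GM h iota mM) :
    ∀ (pq : ℤ × ℤ) (x : ℕ → ↥(Dsub h mM)),
      (∀ N, x N ∈ (GM pq).comap (Dsub h mM).subtype) →
      (∀ N, x (N+1) - x N ∈ LinearMap.range ((hD hdef) ^ N)) →
      ∃ y ∈ (GM pq).comap (Dsub h mM).subtype,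
        ∀ N, y - x N ∈ LinearMap.range ((hD hdef) ^ N) := by
  intro pq x hx1 hx2
  have hx2' := fun N => LinearMap.mem_range.mp (hx2 N)
  choose z hz using hx2'
  have hzc : ∀ N, (h ^ N) ((z N : M)) = ((x (N+1) : M)) - ((x N : M)) := by
    intro N
    rw [← hD_pow hdef]
    rw [hz N]
    push_cast
    ring
  obtain ⟨y, hy1, hy2⟩ := hdef.complete pq (fun N => ((x N : M))) (fun N => hx1 N)
    (fun N => ⟨(z N : M), hzc N⟩)
  have hy2' := fun N => LinearMap.mem_range.mp (hy2 N)
  choose u hu using hy2'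
  have hrec : ∀ N, u N = ((z N : M)) + h (u (N+1)) := by
    intro N
    apply pow_inj hdef.torsionFree N
    rw [map_add, ← pow_apply_succ', hu N, hu (N+1), hzc N]
    abel
  have huD : ∀ N, u N ∈ Dsub h mM := by
    intro N
    rw [mem_Dsub]
    obtain ⟨c, hc⟩ := LinearMap.mem_range.mp (mem_Dsub.mp (z N).2)
    refine ⟨c + m1lin mM (u (N+1)), ?_⟩
    rw [hrec N, map_add, map_add, hc, hLin1 hdef]
  have hyD : y ∈ Dsub h mM := by
    have hy0 : y = ((x 0 : M)) + u 0 := by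
      have := hu 0
      rw [pow_apply_zero] at this
      rw [this]
      abel
    rw [hy0]
    exact Submodule.add_mem _ (x 0).2 (huD 0)
  refine ⟨⟨y, hyD⟩, hy1, fun N => ⟨⟨u N, huD N⟩, ?_⟩⟩
  apply Subtype.ext
  rw [hD_pow hdef]
  push_cast
  rw [hu N]

lemma minimalD (hdef : IsDefo k s GA mA GM h iota mM) (hmin : mA 1 = 0) :
    Dsub h mM = ⊤ := by
  rw [eq_top_iff]
  intro x _
  rw [mem_Dsub]
  obtain ⟨a, b, hab⟩ := hdef.split x
  have h1 : mM 1 (fun _ : Fin 1 => iota a) ∈ LinearMap.range h := by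
    have h2 := hdef.reduce 1 (fun _ => a)
    rw [hmin] at h2
    simpa using h2
  rw [hab, map_add, m1lin_apply, hLin1 hdef]
  exact Submodule.add_mem _ h1 ⟨m1lin mM b, rfl⟩

end Main3

/-- **the functor `D` preserves the deformation structure.**  Let
`A_ħ = (M, GM, h, ι, mM)` be a formal bigraded deformation of an `A_∞`-algebra `A` with
compatible bigrading of `s`-th type, and set `D(A_ħ) = {a : m̃₁ a ∈ ħ·A_ħ}` with
structure maps `m̃_i^D = ħ^{i-2}·m̃_i` restricted to `D(A_ħ)`.  Then: (1) the maps
`m̃_i^D` map `D(A_ħ)`-tuples into `D(A_ħ)`; (2) `D(A_ħ)` is an `A_∞`-algebra over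
`k[ħ]`; (3) `D(A_ħ)` is `ħ`-torsion-free and bigraded complete, hence `ħ`-topologically
free; (4) `D(A_ħ)` is a formal bigraded deformation of an `A_∞`-algebra with compatible
bigrading of `(s+1)`-th type (clauses (2)–(4) are packaged in the `IsDefo` predicate).
If moreover `m₁ = 0` on `A`, then `D(A_ħ) = A_ħ` (and then `D(A_ħ) = T(A_ħ)`). -/
theorem statement17 (k : Type) [Field k] {A M : Type}
    [AddCommGroup A] [Module k A] [AddCommGroup M] [Module k M]
    (s : ℤ)
    (GA : ℤ × ℤ → Submodule k A) (mA : Ops k A)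
    (hintA : DirectSum.IsInternal GA) (hSIA : ∀ n, 1 ≤ n → SI mA n)
    (hHomA : Homog2 GA mA (fun n => ((2 - (n : ℤ)) * s, (2 - (n : ℤ)) * (1 - s))))
    (GM : ℤ × ℤ → Submodule k M) (h : M →ₗ[k] M) (iota : A →ₗ[k] M) (mM : Ops k M)
    (hdef : IsDefo k s GA mA GM h iota mM) :
    -- (1) closure of `D(A_ħ)` under the operations `ħ^{n-2}·m̃_n`
    (∀ (n : ℕ), 2 ≤ n → ∀ a : Fin n → M, (∀ i, a i ∈ Dsub h mM) →
      (h ^ (n - 2)) (mM n a) ∈ Dsub h mM) ∧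
    (∀ x b : M, x ∈ Dsub h mM → mM 1 (fun _ => x) = h b → b ∈ Dsub h mM) ∧
    -- (2)–(4): the `A_∞`-structure `mD` on `D(A_ħ)` makes it a formal bigraded
    -- deformation (in particular `ħ`-torsion-free and bigraded complete, hence
    -- `ħ`-topologically free) of an `A_∞`-algebra of `(s+1)`-th type
    (∃ (A' : ModuleCat.{0} k) (GA' : ℤ × ℤ → Submodule k A') (mA' : Ops k A')
       (iota' : A' →ₗ[k] ↥(Dsub h mM))
       (hD : ↥(Dsub h mM) →ₗ[k] ↥(Dsub h mM)) (mD : Ops k ↥(Dsub h mM)),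
      (∀ x : ↥(Dsub h mM), ((hD x : M)) = h (x : M)) ∧
      (∀ (n : ℕ), 2 ≤ n → ∀ a : Fin n → ↥(Dsub h mM),
        ((mD n a : M)) = (h ^ (n - 2)) (mM n (fun i => ((a i : M))))) ∧
      (∀ a : Fin 1 → ↥(Dsub h mM),
        h ((mD 1 a : M)) = mM 1 (fun i => ((a i : M)))) ∧
      (∀ n, 1 ≤ n → SI mA' n) ∧
      IsDefo k (s+1) GA' mA'
        (fun pq => (GM pq).comap (Dsub h mM).subtype) hD iota' mD) ∧
    -- if `A` is minimal then `D(A_ħ)` is all of `A_ħ` (so `D(A_ħ) = T(A_ħ)`)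
    (mA 1 = 0 → Dsub h mM = ⊤) := by
  refine ⟨?_, ?_, ?_, ?_⟩
  · intro n hn a ha
    obtain ⟨N, rfl⟩ : ∃ N, n = N + 2 := ⟨n - 2, by omega⟩
    exact closD hdef N a ha
  · intro x b hx hb
    exact mem_D_of_unary hdef hb
  · refine ⟨ModuleCat.of k ↥(Dsub h mM),
      fun pq => (GM pq).comap (Dsub h mM).subtype, mD hdef, LinearMap.id, hD hdef, mD hdef,
      fun x => rfl, ?_, ?_, SI_mD hdef, ?_⟩
    · intro n hn a
      obtain ⟨N, rfl⟩ : ∃ N, n = N + 2 := ⟨n - 2, by omega⟩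
      exact mD_ge2 hdef N a
    · intro a
      rw [mD_one, hd1 hdef, m1lin_apply]
      exact congrArg _ (fin1_const (fun i => ((a i : M))))
    · exact ⟨internal_comapD hdef, fun pq x hx => hdef.hHom pq (x : M) hx, torsionFreeD hdef,
        sepD hdef, completeD hdef, fun x y hxy => hxy, fun pq x hx => hx,
        fun y => ⟨y, 0, by rw [map_zero, add_zero]; rfl⟩,
        SI_mD hdef, mD_homog hdef, mD_hlin hdef,
        fun n a => by
          show mD hdef n a - mD hdef n a ∈ LinearMap.range (hD hdef)
          rw [sub_self]
          exact Submodule.zero_mem _⟩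
  · exact minimalD hdef

end Paper
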